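/- arXiv:1301.0040 — 3 statements merged into one kernel-verified Lean document; each statement's English description precedes it below -/
import Mathlib

section
/- For the timed finite automaton A (child automaton of the parallel timing system S₃), the maximum delay δ_A equals 25: every timed word accepted by A has duration strictly less than 25, and for every ε > 0 there is a timed word accepted by A of duration greater than 25 − ε. -/
/-- A transition of a timed automaton: source state, alphabet symbol, destination state,
the list of timers reset (to 0) when the transition is taken, and the conjunction of
constraints `x < c` (represented as pairs `(x, c)`) that must hold for the transition
to be taken. -/
structure TTrans (A Q K : Type) where
  src : Q
  sym : A
  dst : Q
  resets : List K
  constraints : List (K × ℝ)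

/-- One step of a timed automaton with transition list `trs`, from state `q` to state `q'`,
reading symbol `a` at time `t`.  A timer valuation `v` records, for each timer, the timestamp
at which it was last reset (so the current value of timer `k` at time `t` is `t - v k`).
Every constraint `x < c` on the chosen transition must be satisfied, and the transition's
reset timers get reset time `t` in the new valuation `v'`. -/
def TStep {A Q K : Type} (trs : List (TTrans A Q K)) (q : Q) (v : K → ℝ)
    (a : A) (t : ℝ) (q' : Q) (v' : K → ℝ) : Prop :=
  ∃ tr ∈ trs, tr.src = q ∧ tr.sym = a ∧ tr.dst = q' ∧
    (∀ c ∈ tr.constraints, t - v c.1 < c.2) ∧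
    (∀ k, (k ∈ tr.resets → v' k = t) ∧ (k ∉ tr.resets → v' k = v k))

/-- `TRun trs q v w qs`: starting in state `q` with timer valuation `v`, the automaton can
read the finite timed word `w`, visiting exactly the sequence of states `qs`
(`qs` starts with `q` and has length `w.length + 1`). -/
inductive TRun {A Q K : Type} (trs : List (TTrans A Q K)) :
    Q → (K → ℝ) → List (A × ℝ) → List Q → Prop
  | nil (q : Q) (v : K → ℝ) : TRun trs q v [] [q]
  | cons {q : Q} {v : K → ℝ} {a : A} {t : ℝ} {q' : Q} {v' : K → ℝ}
      {w : List (A × ℝ)} {qs : List Q} :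
      TStep trs q v a t q' v' → TRun trs q' v' w qs →
      TRun trs q v ((a, t) :: w) (q :: qs)

/-- The timestamps of a timed word are strictly increasing. -/
def Increasing {A : Type} (w : List (A × ℝ)) : Prop :=
  w.Chain' fun p q => p.2 < q.2

/-- Timestamp of the first symbol of a timed word (0 for the empty word). -/
def firstTime {A : Type} (w : List (A × ℝ)) : ℝ := (w.map Prod.snd).headD 0

/-- Timestamp of the last symbol of a timed word (0 for the empty word). -/
def lastTime {A : Type} (w : List (A × ℝ)) : ℝ := (w.map Prod.snd).getLastD 0

/-- The duration of a timed word: last timestamp minus first timestamp. -/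
def duration {A : Type} (w : List (A × ℝ)) : ℝ := lastTime w - firstTime w

/-- A timed finite automaton: a start state, an accepting state and a finite
list of transitions. -/
structure TFA (A Q K : Type) where
  start : Q
  accept : Q
  trans : List (TTrans A Q K)

/-- A TFA accepts a (nonempty, strictly increasing) finite timed word if some run from the
start state — with all timers initially 0 at the time of the first transition — reads the
whole word and ends in the accepting state. -/
def TFA.Accepts {A Q K : Type} (M : TFA A Q K) (w : List (A × ℝ)) : Prop :=
  w ≠ [] ∧ Increasing w ∧
  ∃ qs : List Q, TRun M.trans M.start (fun _ => firstTime w) w qs ∧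
    qs.getLast? = some M.accept

/-- A timed Büchi automaton: a start state, a set of accepting states and a finite
list of transitions. -/
structure TBA (A Q K : Type) where
  start : Q
  accept : Set Q
  trans : List (TTrans A Q K)

/-- A TBA accepts an infinite timed word `(σ, τ)` (with strictly increasing timestamps)
if some infinite run from the start state — all timers 0 at the time `τ 0` of the first
transition — visits an accepting state infinitely often. -/
def TBA.Accepts {A Q K : Type} (M : TBA A Q K) (σ : ℕ → A) (τ : ℕ → ℝ) : Prop :=
  StrictMono τ ∧
  ∃ (ρ : ℕ → Q) (v : ℕ → K → ℝ),
    ρ 0 = M.start ∧ v 0 = (fun _ => τ 0) ∧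
    (∀ i, TStep M.trans (ρ i) (v i) (σ i) (τ i) (ρ (i + 1)) (v (i + 1))) ∧
    (∀ n, ∃ m, n ≤ m ∧ ρ m ∈ M.accept)

/-- `u` is a subword over the finite path `p` of TBA `M` if the transitions of `u` are taken
consecutively, traversing exactly the states of `p`, within some (finite prefix of a) run of
`M` from its start state, all timer constraints along the run being satisfied. -/
def TBA.SubwordOver {A Q K : Type} (M : TBA A Q K) (p : List Q) (u : List (A × ℝ)) : Prop :=
  ∃ (w₀ : List (A × ℝ)) (qs₀ : List Q),
    qs₀.length = w₀.length ∧
    Increasing (w₀ ++ u) ∧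
    TRun M.trans M.start (fun _ => firstTime (w₀ ++ u)) (w₀ ++ u) (qs₀ ++ p)

/-- The maximum delay `Δ_M(p)` along a path `p`: the supremum of the durations of all
subwords over `p`. -/
noncomputable def TBA.maxDelay {A Q K : Type} (M : TBA A Q K) (p : List Q) : ℝ :=
  sSup {d : ℝ | ∃ u, M.SubwordOver p u ∧ duration u = d}
/-- The child TFA A of the parallel timing system S₃, over the alphabet {0, 1}
(encoded in ℕ): states β₁ = 0 (start), …, β₇ = 6 (accepting), two timers U = 0 and
V = 1, and transitions β₁→β₂ on 0 resetting U; β₂→β₃ on 0; β₃→β₄ on 0; β₄→β₇ on 0 with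
constraint U < 10; β₂→β₅ on 1; β₅→β₄ on 0; β₅→β₆ on 1 with constraint U < 20, resetting
V; β₆→β₇ on 1 with constraint V < 5. -/
def childA : TFA ℕ ℕ (Fin 2) :=
  { start := 0, accept := 6,
    trans := [⟨0, 0, 1, [0], []⟩,
              ⟨1, 0, 2, [], []⟩,
              ⟨2, 0, 3, [], []⟩,
              ⟨3, 0, 6, [], [(0, 10)]⟩,
              ⟨1, 1, 4, [], []⟩,
              ⟨4, 0, 3, [], []⟩,
              ⟨4, 1, 5, [1], [(0, 20)]⟩,
              ⟨5, 1, 6, [], [(1, 5)]⟩] }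

section helpers
variable {v v' : Fin 2 → ℝ} {a : ℕ} {t : ℝ} {q' : ℕ}

lemma step0 (h : TStep childA.trans 0 v a t q' v') :
    q' = 1 ∧ v' 0 = t ∧ v' 1 = v 1 := by
  obtain ⟨tr, htr, hsrc, hsym, hdst, hc, hr⟩ := h
  simp only [childA, List.mem_cons, List.not_mem_nil, or_false] at htr
  rcases htr with rfl|rfl|rfl|rfl|rfl|rfl|rfl|rfl <;> simp_all

lemma step1 (h : TStep childA.trans 1 v a t q' v') :
    (q' = 2 ∨ q' = 4) ∧ v' 0 = v 0 ∧ v' 1 = v 1 := by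
  obtain ⟨tr, htr, hsrc, hsym, hdst, hc, hr⟩ := h
  simp only [childA, List.mem_cons, List.not_mem_nil, or_false] at htr
  rcases htr with rfl|rfl|rfl|rfl|rfl|rfl|rfl|rfl <;> simp_all

lemma step2 (h : TStep childA.trans 2 v a t q' v') :
    q' = 3 ∧ v' 0 = v 0 ∧ v' 1 = v 1 := by
  obtain ⟨tr, htr, hsrc, hsym, hdst, hc, hr⟩ := h
  simp only [childA, List.mem_cons, List.not_mem_nil, or_false] at htr
  rcases htr with rfl|rfl|rfl|rfl|rfl|rfl|rfl|rfl <;> simp_all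

lemma step3 (h : TStep childA.trans 3 v a t q' v') :
    q' = 6 ∧ t - v 0 < 10 := by
  obtain ⟨tr, htr, hsrc, hsym, hdst, hc, hr⟩ := h
  simp only [childA, List.mem_cons, List.not_mem_nil, or_false] at htr
  rcases htr with rfl|rfl|rfl|rfl|rfl|rfl|rfl|rfl <;> simp_all

lemma step4 (h : TStep childA.trans 4 v a t q' v') :
    (q' = 3 ∧ v' 0 = v 0 ∧ v' 1 = v 1) ∨
    (q' = 5 ∧ t - v 0 < 20 ∧ v' 1 = t) := by
  obtain ⟨tr, htr, hsrc, hsym, hdst, hc, hr⟩ := h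
  simp only [childA, List.mem_cons, List.not_mem_nil, or_false] at htr
  rcases htr with rfl|rfl|rfl|rfl|rfl|rfl|rfl|rfl <;> simp_all

lemma step5 (h : TStep childA.trans 5 v a t q' v') :
    q' = 6 ∧ t - v 1 < 5 := by
  obtain ⟨tr, htr, hsrc, hsym, hdst, hc, hr⟩ := h
  simp only [childA, List.mem_cons, List.not_mem_nil, or_false] at htr
  rcases htr with rfl|rfl|rfl|rfl|rfl|rfl|rfl|rfl <;> simp_all

lemma step6 (h : TStep childA.trans 6 v a t q' v') : False := by
  obtain ⟨tr, htr, hsrc, hsym, hdst, hc, hr⟩ := h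
  simp only [childA, List.mem_cons, List.not_mem_nil, or_false] at htr
  rcases htr with rfl|rfl|rfl|rfl|rfl|rfl|rfl|rfl <;> simp_all
end helpers

lemma part1 : ∀ w, childA.Accepts w → duration w < 25 := by
  rintro w ⟨hne, hinc, qs, hrun, hlast⟩
  cases hrun with
  | nil => exact absurd rfl hne
  | cons hs1 hr1 =>
    rename_i a1 t1 q1 v1 w1 qs1
    obtain ⟨rfl, hv10, hv11⟩ := step0 hs1
    have hft : firstTime ((a1, t1) :: w1) = t1 := rfl
    rw [hft] at hv11
    cases hr1 with
    | nil => simp [childA] at hlast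
    | cons hs2 hr2 =>
      rename_i a2 t2 q2 v2 w2 qs2
      obtain ⟨hq2, hv20, hv21⟩ := step1 hs2
      rw [hv10] at hv20
      rcases hq2 with rfl | rfl
      · -- via state 2
        cases hr2 with
        | nil => simp [childA] at hlast
        | cons hs3 hr3 =>
          rename_i a3 t3 q3 v3 w3 qs3
          obtain ⟨rfl, hv30, hv31⟩ := step2 hs3
          rw [hv20] at hv30
          cases hr3 with
          | nil => simp [childA] at hlast
          | cons hs4 hr4 =>
            rename_i a4 t4 q4 v4 w4 qs4
            obtain ⟨rfl, hc4⟩ := step3 hs4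
            rw [hv30] at hc4
            cases hr4 with
            | nil =>
              simp only [duration, firstTime, lastTime, List.map_cons, List.map_nil, List.headD_cons,
                List.getLastD_cons, List.getLastD_nil] at hc4 ⊢
              linarith
            | cons hs5 _ => exact absurd hs5 step6
      · -- via state 4
        cases hr2 with
        | nil => simp [childA] at hlast
        | cons hs3 hr3 =>
          rename_i a3 t3 q3 v3 w3 qs3
          rcases step4 hs3 with ⟨rfl, hv30, hv31⟩ | ⟨rfl, hc3, hv31⟩
          · -- to state 3
            rw [hv20] at hv30
            cases hr3 with
            | nil => simp [childA] at hlast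
            | cons hs4 hr4 =>
              rename_i a4 t4 q4 v4 w4 qs4
              obtain ⟨rfl, hc4⟩ := step3 hs4
              rw [hv30] at hc4
              cases hr4 with
              | nil =>
                simp only [duration, firstTime, lastTime, List.map_cons, List.map_nil, List.headD_cons,
                  List.getLastD_cons, List.getLastD_nil] at hc4 ⊢
                linarith
              | cons hs5 _ => exact absurd hs5 step6
          · -- to state 5
            rw [hv20] at hc3
            cases hr3 with
            | nil => simp [childA] at hlast
            | cons hs4 hr4 =>
              rename_i a4 t4 q4 v4 w4 qs4
              obtain ⟨rfl, hc4⟩ := step5 hs4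
              rw [hv31] at hc4
              cases hr4 with
              | nil =>
                simp only [duration, firstTime, lastTime, List.map_cons, List.map_nil, List.headD_cons,
                  List.getLastD_cons, List.getLastD_nil] at hc4 ⊢
                linarith
              | cons hs5 _ => exact absurd hs5 step6

lemma part2 : ∀ ε : ℝ, 0 < ε → ∃ w, childA.Accepts w ∧ 25 - ε < duration w := by
  intro ε hε
  set δ := min ε 1 with hδdef
  have hδ0 : 0 < δ := lt_min hε one_pos
  have hδ1 : δ ≤ 1 := min_le_right _ _
  have hδε : δ ≤ ε := min_le_left _ _
  refine ⟨[((0:ℕ), (0:ℝ)), (1, 1), (1, 20 - δ/4), (1, 25 - δ/2)], ⟨by simp, ?_, ?_⟩, ?_⟩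
  · simp only [Increasing, List.Chain', List.isChain_cons_cons, List.isChain_singleton, and_true]
    norm_num
    constructor <;> linarith
  · refine ⟨[0, 1, 4, 5, 6], ?_, by simp [childA]⟩
    show TRun childA.trans 0 _ _ _
    refine TRun.cons (q' := 1) (v' := fun _ => 0) ?_
      (TRun.cons (q' := 4) (v' := fun _ => 0) ?_
      (TRun.cons (q' := 5) (v' := fun k => if k = 0 then 0 else 20 - δ/4) ?_
      (TRun.cons (q' := 6) (v' := fun k => if k = 0 then 0 else 20 - δ/4) ?_
      (TRun.nil _ _))))
    · exact ⟨⟨0, 0, 1, [0], []⟩, by simp [childA], rfl, rfl, rfl, by simp,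
        fun k => ⟨fun _ => rfl, fun _ => rfl⟩⟩
    · exact ⟨⟨1, 1, 4, [], []⟩, by simp [childA], rfl, rfl, rfl, by simp,
        fun k => ⟨fun h => absurd h (List.not_mem_nil (a := k)), fun _ => rfl⟩⟩
    · refine ⟨⟨4, 1, 5, [1], [(0, 20)]⟩, by simp [childA], rfl, rfl, rfl, ?_, ?_⟩
      · intro c hc
        simp only [List.mem_singleton] at hc
        subst hc
        simp only
        linarith
      · intro k
        fin_cases k <;> simp
    · refine ⟨⟨5, 1, 6, [], [(1, 5)]⟩, by simp [childA], rfl, rfl, rfl, ?_, ?_⟩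
      · intro c hc
        simp only [List.mem_singleton] at hc
        subst hc
        simp only [if_neg (by decide : ¬(1 : Fin 2) = 0)]
        linarith
      · exact fun k => ⟨fun h => absurd h (List.not_mem_nil (a := k)), fun _ => rfl⟩
  · simp only [duration, firstTime, lastTime, List.map_cons, List.map_nil,
      List.headD_cons, List.getLastD_cons, List.getLastD_nil]
    linarith
/-- The maximum delay δ_A of the child TFA A equals 25: every accepted timed word has
duration < 25, and for every ε > 0 some accepted timed word has duration > 25 - ε. -/
theorem childA_maxDelay :
    (∀ w, childA.Accepts w → duration w < 25) ∧
    (∀ ε : ℝ, 0 < ε → ∃ w, childA.Accepts w ∧ 25 - ε < duration w) := by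
  exact ⟨part1, part2⟩
end

section
/- For the parent timed Büchi automaton P of the matrix-multiplication parallel timing system and the path ρ₁ = ⟨s₃, s₄, s₅, s₆, s₇, s₈, s₉, s₁₀, s₁₁, s₁₂, s₀⟩, the maximum delay Δ_P(ρ₁) equals 8.1 (milliseconds): every subword over ρ₁ has duration strictly less than 8.1, and for every ε > 0 there is a subword over ρ₁ of duration greater than 8.1 − ε. -/
/-- The parent TBA P of the matrix-multiplication parallel timing system: 13 states
s₀ = 0, …, s₁₂ = 12 forming a single cycle, with start state s₀ and accepting set {s₁};
transitions eᵢ : s_{i-1} → sᵢ (i = 1,…,12) and e₁₃ : s₁₂ → s₀, each carrying a distinct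
symbol (symbol `i - 1` on eᵢ); 12 timers t₁ = 0, …, t₁₂ = 11 with bounds
(c₁,…,c₁₂) = (0.2, 0.3, 0.3, 0.2, 0.3, 0.3, 0.2, 0.3, 0.3, 1, 1.5, 4) ms: eᵢ resets tᵢ
for i = 1,…,12, e₁ carries no constraint, and eᵢ carries the single constraint
`t_{i-1} < c_{i-1}` for i = 2,…,13. -/
def Pmm : TBA ℕ ℕ ℕ :=
  { start := 0, accept := {1},
    trans := [⟨0, 0, 1, [0], []⟩,
              ⟨1, 1, 2, [1], [(0, 0.2)]⟩,
              ⟨2, 2, 3, [2], [(1, 0.3)]⟩,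
              ⟨3, 3, 4, [3], [(2, 0.3)]⟩,
              ⟨4, 4, 5, [4], [(3, 0.2)]⟩,
              ⟨5, 5, 6, [5], [(4, 0.3)]⟩,
              ⟨6, 6, 7, [6], [(5, 0.3)]⟩,
              ⟨7, 7, 8, [7], [(6, 0.2)]⟩,
              ⟨8, 8, 9, [8], [(7, 0.3)]⟩,
              ⟨9, 9, 10, [9], [(8, 0.3)]⟩,
              ⟨10, 10, 11, [10], [(9, 1)]⟩,
              ⟨11, 11, 12, [11], [(10, 1.5)]⟩,
              ⟨12, 12, 0, [], [(11, 4)]⟩] }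

lemma run_split {A Q K : Type} {trs : List (TTrans A Q K)} {q v w qs}
    (h : TRun trs q v w qs) :
    ∀ qs₁ qs₂ : List Q, qs = qs₁ ++ qs₂ → qs₂ ≠ [] →
    ∃ (w₁ w₂ : List (A × ℝ)) (q₂ : Q) (v₂ : K → ℝ),
      w = w₁ ++ w₂ ∧ w₁.length = qs₁.length ∧ TRun trs q₂ v₂ w₂ qs₂ := by
  induction h with
  | nil q v =>
    intro qs₁ qs₂ he hne
    rcases qs₁ with _ | ⟨a, rest⟩
    · exact ⟨[], [], q, v, rfl, rfl, by rw [List.nil_append] at he; exact he ▸ TRun.nil q v⟩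
    · simp only [List.cons_append, List.cons.injEq] at he
      exact absurd (List.append_eq_nil_iff.mp he.2.symm).2 hne
  | @cons q v a t q' v' w qs hstep hrun ih =>
    intro qs₁ qs₂ he hne
    rcases qs₁ with _ | ⟨b, rest⟩
    · exact ⟨[], _, q, v, rfl, rfl, by rw [List.nil_append] at he; exact he ▸ TRun.cons hstep hrun⟩
    · simp only [List.cons_append, List.cons.injEq] at he
      obtain ⟨w₁, w₂, q₂, v₂, rfl, hl, hr⟩ := ih rest qs₂ he.2 hne
      exact ⟨(a, t) :: w₁, w₂, q₂, v₂, rfl, by simp [hl], hr⟩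

lemma pmm_step3 {v v' : ℕ → ℝ} {a : ℕ} {t : ℝ} {q' : ℕ}
    (h : TStep Pmm.trans 3 v a t q' v') : q' = 4 ∧ v' 3 = t := by
  obtain ⟨tr, htr, hsrc, -, hdst, hcon, hres⟩ := h
  simp only [Pmm, List.mem_cons, List.not_mem_nil, or_false] at htr
  rcases htr with rfl|rfl|rfl|rfl|rfl|rfl|rfl|rfl|rfl|rfl|rfl|rfl|rfl <;> simp_all

lemma pmm_step4 {v v' : ℕ → ℝ} {a : ℕ} {t : ℝ} {q' : ℕ}
    (h : TStep Pmm.trans 4 v a t q' v') : q' = 5 ∧ t - v 3 < 0.2 ∧ v' 4 = t := by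
  obtain ⟨tr, htr, hsrc, -, hdst, hcon, hres⟩ := h
  simp only [Pmm, List.mem_cons, List.not_mem_nil, or_false] at htr
  rcases htr with rfl|rfl|rfl|rfl|rfl|rfl|rfl|rfl|rfl|rfl|rfl|rfl|rfl <;> simp_all

lemma pmm_step5 {v v' : ℕ → ℝ} {a : ℕ} {t : ℝ} {q' : ℕ}
    (h : TStep Pmm.trans 5 v a t q' v') : q' = 6 ∧ t - v 4 < 0.3 ∧ v' 5 = t := by
  obtain ⟨tr, htr, hsrc, -, hdst, hcon, hres⟩ := h
  simp only [Pmm, List.mem_cons, List.not_mem_nil, or_false] at htr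
  rcases htr with rfl|rfl|rfl|rfl|rfl|rfl|rfl|rfl|rfl|rfl|rfl|rfl|rfl <;> simp_all

lemma pmm_step6 {v v' : ℕ → ℝ} {a : ℕ} {t : ℝ} {q' : ℕ}
    (h : TStep Pmm.trans 6 v a t q' v') : q' = 7 ∧ t - v 5 < 0.3 ∧ v' 6 = t := by
  obtain ⟨tr, htr, hsrc, -, hdst, hcon, hres⟩ := h
  simp only [Pmm, List.mem_cons, List.not_mem_nil, or_false] at htr
  rcases htr with rfl|rfl|rfl|rfl|rfl|rfl|rfl|rfl|rfl|rfl|rfl|rfl|rfl <;> simp_all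

lemma pmm_step7 {v v' : ℕ → ℝ} {a : ℕ} {t : ℝ} {q' : ℕ}
    (h : TStep Pmm.trans 7 v a t q' v') : q' = 8 ∧ t - v 6 < 0.2 ∧ v' 7 = t := by
  obtain ⟨tr, htr, hsrc, -, hdst, hcon, hres⟩ := h
  simp only [Pmm, List.mem_cons, List.not_mem_nil, or_false] at htr
  rcases htr with rfl|rfl|rfl|rfl|rfl|rfl|rfl|rfl|rfl|rfl|rfl|rfl|rfl <;> simp_all

lemma pmm_step8 {v v' : ℕ → ℝ} {a : ℕ} {t : ℝ} {q' : ℕ}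
    (h : TStep Pmm.trans 8 v a t q' v') : q' = 9 ∧ t - v 7 < 0.3 ∧ v' 8 = t := by
  obtain ⟨tr, htr, hsrc, -, hdst, hcon, hres⟩ := h
  simp only [Pmm, List.mem_cons, List.not_mem_nil, or_false] at htr
  rcases htr with rfl|rfl|rfl|rfl|rfl|rfl|rfl|rfl|rfl|rfl|rfl|rfl|rfl <;> simp_all

lemma pmm_step9 {v v' : ℕ → ℝ} {a : ℕ} {t : ℝ} {q' : ℕ}
    (h : TStep Pmm.trans 9 v a t q' v') : q' = 10 ∧ t - v 8 < 0.3 ∧ v' 9 = t := by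
  obtain ⟨tr, htr, hsrc, -, hdst, hcon, hres⟩ := h
  simp only [Pmm, List.mem_cons, List.not_mem_nil, or_false] at htr
  rcases htr with rfl|rfl|rfl|rfl|rfl|rfl|rfl|rfl|rfl|rfl|rfl|rfl|rfl <;> simp_all

lemma pmm_step10 {v v' : ℕ → ℝ} {a : ℕ} {t : ℝ} {q' : ℕ}
    (h : TStep Pmm.trans 10 v a t q' v') : q' = 11 ∧ t - v 9 < 1 ∧ v' 10 = t := by
  obtain ⟨tr, htr, hsrc, -, hdst, hcon, hres⟩ := h
  simp only [Pmm, List.mem_cons, List.not_mem_nil, or_false] at htr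
  rcases htr with rfl|rfl|rfl|rfl|rfl|rfl|rfl|rfl|rfl|rfl|rfl|rfl|rfl <;> simp_all

lemma pmm_step11 {v v' : ℕ → ℝ} {a : ℕ} {t : ℝ} {q' : ℕ}
    (h : TStep Pmm.trans 11 v a t q' v') : q' = 12 ∧ t - v 10 < 1.5 ∧ v' 11 = t := by
  obtain ⟨tr, htr, hsrc, -, hdst, hcon, hres⟩ := h
  simp only [Pmm, List.mem_cons, List.not_mem_nil, or_false] at htr
  rcases htr with rfl|rfl|rfl|rfl|rfl|rfl|rfl|rfl|rfl|rfl|rfl|rfl|rfl <;> simp_all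

lemma pmm_step12 {v v' : ℕ → ℝ} {a : ℕ} {t : ℝ} {q' : ℕ}
    (h : TStep Pmm.trans 12 v a t q' v') : q' = 0 ∧ t - v 11 < 4 := by
  obtain ⟨tr, htr, hsrc, -, hdst, hcon, hres⟩ := h
  simp only [Pmm, List.mem_cons, List.not_mem_nil, or_false] at htr
  rcases htr with rfl|rfl|rfl|rfl|rfl|rfl|rfl|rfl|rfl|rfl|rfl|rfl|rfl <;> simp_all

lemma mkStep {A Q K : Type} [DecidableEq K] {trs : List (TTrans A Q K)}
    (tr : TTrans A Q K) (htr : tr ∈ trs) {v : K → ℝ} {t : ℝ}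
    (hc : ∀ c ∈ tr.constraints, t - v c.1 < c.2) :
    TStep trs tr.src v tr.sym t tr.dst (fun k => if k ∈ tr.resets then t else v k) :=
  ⟨tr, htr, rfl, rfl, rfl, hc, fun k => ⟨fun h => by simp [h], fun h => by simp [h]⟩⟩

lemma lower_bound :
    ∀ ε : ℝ, 0 < ε → ∃ u, Pmm.SubwordOver [3, 4, 5, 6, 7, 8, 9, 10, 11, 12, 0] u ∧
      8.1 - ε < duration u := by
  intro ε hε
  set δ : ℝ := min ε 1 / 10 with hδdef
  have hδ0 : 0 < δ := by
    have := lt_min hε (one_pos (α := ℝ)); rw [hδdef]; linarith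
  have hδ1 : δ ≤ 0.1 := by
    have := min_le_right ε (1:ℝ); rw [hδdef]; norm_num; linarith
  have hδε : 9 * δ < ε := by
    have h1 := min_le_left ε (1:ℝ)
    rw [hδdef]; linarith
  refine ⟨[(3, 3*δ), (4, 0.2+2*δ), (5, 0.5+δ), (6, 0.8), (7, 1-δ), (8, 1.3-2*δ),
      (9, 1.6-3*δ), (10, 2.6-4*δ), (11, 4.1-5*δ), (12, 8.1-6*δ)],
    ⟨[(0,(0:ℝ)),(1,δ),(2,2*δ)], [0,1,2], rfl, ?_, ?_⟩, ?_⟩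
  · simp only [Increasing, List.Chain', List.cons_append, List.nil_append, List.isChain_cons_cons,
      List.isChain_singleton, and_true]
    norm_num
    refine ⟨?_,?_,?_,?_,?_,?_,?_,?_,?_,?_,?_,?_⟩ <;> linarith
  · have hft : firstTime (([(0,(0:ℝ)),(1,δ),(2,2*δ)] : List (ℕ × ℝ)) ++
        [(3, 3*δ), (4, 0.2+2*δ), (5, 0.5+δ), (6, 0.8), (7, 1-δ), (8, 1.3-2*δ),
        (9, 1.6-3*δ), (10, 2.6-4*δ), (11, 4.1-5*δ), (12, 8.1-6*δ)]) = 0 := by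
      simp [firstTime]
    rw [hft]
    show TRun Pmm.trans 0 _ _ _
    simp only [List.cons_append, List.nil_append]
    refine TRun.cons (mkStep ⟨0, 0, 1, [0], []⟩ (by simp only [Pmm]; norm_num) ?_) ?_
    rotate_left
    refine TRun.cons (mkStep ⟨1, 1, 2, [1], [(0, 0.2)]⟩ (by simp only [Pmm]; norm_num) ?_) ?_
    rotate_left
    refine TRun.cons (mkStep ⟨2, 2, 3, [2], [(1, 0.3)]⟩ (by simp only [Pmm]; norm_num) ?_) ?_
    rotate_left
    refine TRun.cons (mkStep ⟨3, 3, 4, [3], [(2, 0.3)]⟩ (by simp only [Pmm]; norm_num) ?_) ?_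
    rotate_left
    refine TRun.cons (mkStep ⟨4, 4, 5, [4], [(3, 0.2)]⟩ (by simp only [Pmm]; norm_num) ?_) ?_
    rotate_left
    refine TRun.cons (mkStep ⟨5, 5, 6, [5], [(4, 0.3)]⟩ (by simp only [Pmm]; norm_num) ?_) ?_
    rotate_left
    refine TRun.cons (mkStep ⟨6, 6, 7, [6], [(5, 0.3)]⟩ (by simp only [Pmm]; norm_num) ?_) ?_
    rotate_left
    refine TRun.cons (mkStep ⟨7, 7, 8, [7], [(6, 0.2)]⟩ (by simp only [Pmm]; norm_num) ?_) ?_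
    rotate_left
    refine TRun.cons (mkStep ⟨8, 8, 9, [8], [(7, 0.3)]⟩ (by simp only [Pmm]; norm_num) ?_) ?_
    rotate_left
    refine TRun.cons (mkStep ⟨9, 9, 10, [9], [(8, 0.3)]⟩ (by simp only [Pmm]; norm_num) ?_) ?_
    rotate_left
    refine TRun.cons (mkStep ⟨10, 10, 11, [10], [(9, 1)]⟩ (by simp only [Pmm]; norm_num) ?_) ?_
    rotate_left
    refine TRun.cons (mkStep ⟨11, 11, 12, [11], [(10, 1.5)]⟩ (by simp only [Pmm]; norm_num) ?_) ?_
    rotate_left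
    refine TRun.cons (mkStep ⟨12, 12, 0, [], [(11, 4)]⟩ (by simp only [Pmm]; norm_num) ?_) ?_
    rotate_left
    · exact TRun.nil _ _
    all_goals intro c hc
    all_goals fin_cases hc
    all_goals norm_num
    all_goals linarith
  · simp only [duration, lastTime, firstTime, List.map_cons, List.map_nil,
      List.headD_cons, List.getLastD_cons, List.getLastD_nil]
    linarith

lemma upper_bound :
    ∀ u, Pmm.SubwordOver [3, 4, 5, 6, 7, 8, 9, 10, 11, 12, 0] u → duration u < 8.1 := by
  intro u hu
  obtain ⟨w₀, qs₀, hlen, -, hrun⟩ := hu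
  obtain ⟨w₁, w₂, q₂, v₂, heq, hl1, hr⟩ :=
    run_split hrun qs₀ [3, 4, 5, 6, 7, 8, 9, 10, 11, 12, 0] rfl (by simp)
  obtain ⟨-, rfl⟩ := List.append_inj heq (by omega)
  rcases hr with _ | ⟨hs1, hr⟩
  rcases hr with _ | ⟨hs2, hr⟩
  rcases hr with _ | ⟨hs3, hr⟩
  rcases hr with _ | ⟨hs4, hr⟩
  rcases hr with _ | ⟨hs5, hr⟩
  rcases hr with _ | ⟨hs6, hr⟩
  rcases hr with _ | ⟨hs7, hr⟩
  rcases hr with _ | ⟨hs8, hr⟩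
  rcases hr with _ | ⟨hs9, hr⟩
  rcases hr with _ | ⟨hs10, hr⟩
  rcases hr with _ | ⟨-, hr⟩
  case cons => cases hr
  obtain ⟨-, h1⟩ := pmm_step3 hs1
  obtain ⟨-, h2, h2'⟩ := pmm_step4 hs2
  obtain ⟨-, h3, h3'⟩ := pmm_step5 hs3
  obtain ⟨-, h4, h4'⟩ := pmm_step6 hs4
  obtain ⟨-, h5, h5'⟩ := pmm_step7 hs5
  obtain ⟨-, h6, h6'⟩ := pmm_step8 hs6
  obtain ⟨-, h7, h7'⟩ := pmm_step9 hs7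
  obtain ⟨-, h8, h8'⟩ := pmm_step10 hs8
  obtain ⟨-, h9, h9'⟩ := pmm_step11 hs9
  obtain ⟨-, h10⟩ := pmm_step12 hs10
  simp only [duration, lastTime, firstTime, List.map_cons, List.map_nil,
    List.headD_cons, List.getLastD_cons, List.getLastD_nil]
  norm_num
  linarith


/-- For the path ρ₁ = ⟨s₃, s₄, …, s₁₂, s₀⟩, the maximum delay Δ_P(ρ₁) equals 8.1 ms:
every subword over ρ₁ has duration < 8.1, and for every ε > 0 some subword over ρ₁ has
duration > 8.1 - ε. -/
theorem Pmm_maxDelay_rho1 :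
    (∀ u, Pmm.SubwordOver [3, 4, 5, 6, 7, 8, 9, 10, 11, 12, 0] u → duration u < 8.1) ∧
    (∀ ε : ℝ, 0 < ε → ∃ u, Pmm.SubwordOver [3, 4, 5, 6, 7, 8, 9, 10, 11, 12, 0] u ∧
      8.1 - ε < duration u) := by
  exact ⟨upper_bound, lower_bound⟩
end

section
/- For the parent timed Büchi automaton P of the matrix-multiplication parallel timing system and the path ρ₂ = ⟨s₆, s₇, s₈, s₉, s₁₀, s₁₁, s₁₂, s₀⟩, the maximum delay Δ_P(ρ₂) equals 7.3 (milliseconds): every subword over ρ₂ has duration strictly less than 7.3, and for every ε > 0 there is a subword over ρ₂ of duration greater than 7.3 − ε. -/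
section Aux

/-- Peel a prefix off a run. -/
lemma peel_run {A Q K : Type} {trs : List (TTrans A Q K)} :
    ∀ (w₀ : List (A × ℝ)) (qs₀ : List Q) (q : Q) (v : K → ℝ) (u : List (A × ℝ)) (p : List Q),
      qs₀.length = w₀.length → TRun trs q v (w₀ ++ u) (qs₀ ++ p) →
      ∃ q' v', TRun trs q' v' u p := by
  intro w₀
  induction w₀ with
  | nil =>
    intro qs₀ q v u p hlen hrun
    rw [List.length_nil, List.length_eq_zero_iff] at hlen
    subst hlen
    simp only [List.nil_append] at hrun
    exact ⟨q, v, hrun⟩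
  | cons hd tl ih =>
    intro qs₀ q v u p hlen hrun
    cases qs₀ with
    | nil => simp at hlen
    | cons q₀ qs₀' =>
      simp only [List.cons_append] at hrun
      cases hrun with
      | cons hstep hrest =>
        exact ih qs₀' _ _ u p (by simpa using hlen) hrest

lemma step_at6 {v v' : ℕ → ℝ} {a : ℕ} {t : ℝ} {q' : ℕ}
    (h : TStep Pmm.trans 6 v a t q' v') : v' 6 = t := by
  obtain ⟨tr, htr, hsrc, -, -, hcon, hres⟩ := h
  fin_cases htr <;> simp_all <;> exact (hres 6).1 (by simp)

lemma step_at7 {v v' : ℕ → ℝ} {a : ℕ} {t : ℝ} {q' : ℕ}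
    (h : TStep Pmm.trans 7 v a t q' v') : t - v 6 < 0.2 ∧ v' 7 = t := by
  obtain ⟨tr, htr, hsrc, -, -, hcon, hres⟩ := h
  fin_cases htr <;> simp_all <;>
    exact ⟨hcon (6, 0.2) (by simp), (hres 7).1 (by simp)⟩

lemma step_at8 {v v' : ℕ → ℝ} {a : ℕ} {t : ℝ} {q' : ℕ}
    (h : TStep Pmm.trans 8 v a t q' v') : t - v 7 < 0.3 ∧ v' 8 = t := by
  obtain ⟨tr, htr, hsrc, -, -, hcon, hres⟩ := h
  fin_cases htr <;> simp_all <;>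
    exact ⟨hcon (7, 0.3) (by simp), (hres 8).1 (by simp)⟩

lemma step_at9 {v v' : ℕ → ℝ} {a : ℕ} {t : ℝ} {q' : ℕ}
    (h : TStep Pmm.trans 9 v a t q' v') : t - v 8 < 0.3 ∧ v' 9 = t := by
  obtain ⟨tr, htr, hsrc, -, -, hcon, hres⟩ := h
  fin_cases htr <;> simp_all <;>
    exact ⟨hcon (8, 0.3) (by simp), (hres 9).1 (by simp)⟩

lemma step_at10 {v v' : ℕ → ℝ} {a : ℕ} {t : ℝ} {q' : ℕ}
    (h : TStep Pmm.trans 10 v a t q' v') : t - v 9 < 1 ∧ v' 10 = t := by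
  obtain ⟨tr, htr, hsrc, -, -, hcon, hres⟩ := h
  fin_cases htr <;> simp_all <;>
    exact ⟨hcon (9, 1) (by simp), (hres 10).1 (by simp)⟩

lemma step_at11 {v v' : ℕ → ℝ} {a : ℕ} {t : ℝ} {q' : ℕ}
    (h : TStep Pmm.trans 11 v a t q' v') : t - v 10 < 1.5 ∧ v' 11 = t := by
  obtain ⟨tr, htr, hsrc, -, -, hcon, hres⟩ := h
  fin_cases htr <;> simp_all <;>
    exact ⟨hcon (10, 1.5) (by simp), (hres 11).1 (by simp)⟩

lemma step_at12 {v v' : ℕ → ℝ} {a : ℕ} {t : ℝ} {q' : ℕ}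
    (h : TStep Pmm.trans 12 v a t q' v') : t - v 11 < 4 := by
  obtain ⟨tr, htr, hsrc, -, -, hcon, hres⟩ := h
  fin_cases htr <;> simp_all <;>
    exact hcon (11, 4) (by simp)

end Aux

noncomputable def ttP (δ : ℝ) : ℕ → ℝ
  | 0 => 0
  | 1 => δ
  | 2 => 2*δ
  | 3 => 3*δ
  | 4 => 4*δ
  | 5 => 5*δ
  | 6 => 6*δ
  | 7 => 0.2+5*δ
  | 8 => 0.5+4*δ
  | 9 => 0.8+3*δ
  | 10 => 1.8+2*δ
  | 11 => 3.3+δ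
  | _ => 7.3

noncomputable def vvP (δ : ℝ) (i : ℕ) : ℕ → ℝ := fun k => if k < i then ttP δ k else 0

lemma vvP_reset (δ : ℝ) (i : ℕ) (v' : ℕ → ℝ) (hv' : v' = vvP δ (i+1)) :
    ∀ k, (k ∈ [i] → v' k = ttP δ i) ∧ (k ∉ [i] → v' k = vvP δ i k) := by
  subst hv'
  intro k
  refine ⟨fun hk => ?_, fun hk => ?_⟩
  · simp only [List.mem_singleton] at hk; subst hk; simp [vvP]
  · simp only [List.mem_singleton] at hk
    simp only [vvP]
    split_ifs with h1 h2 <;> first | rfl | omega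

lemma vvP_eval (δ : ℝ) {i k : ℕ} (h : k < i) : vvP δ i k = ttP δ k := by
  simp [vvP, h]

lemma run_P (δ : ℝ) (h1 : 0 < δ) (h2 : δ < 0.2) :
    TRun Pmm.trans 0 (vvP δ 0)
      ([(0, ttP δ 0), (1, ttP δ 1), (2, ttP δ 2), (3, ttP δ 3), (4, ttP δ 4),
        (5, ttP δ 5), (6, ttP δ 6), (7, ttP δ 7), (8, ttP δ 8), (9, ttP δ 9),
        (10, ttP δ 10), (11, ttP δ 11), (12, ttP δ 12)])
      [0, 1, 2, 3, 4, 5, 6, 7, 8, 9, 10, 11, 12, 0] := by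
  refine TRun.cons (v' := vvP δ 1) ⟨⟨0, 0, 1, [0], []⟩, by simp [Pmm], rfl, rfl, rfl, by simp,
    vvP_reset δ 0 _ rfl⟩ ?_
  refine TRun.cons (v' := vvP δ 2) ⟨⟨1, 1, 2, [1], [(0, 0.2)]⟩, by simp [Pmm], rfl, rfl, rfl, ?_,
    vvP_reset δ 1 _ rfl⟩ ?_
  · intro c hc; simp at hc; subst hc; rw [vvP_eval δ (by norm_num)]
    simp only [ttP]; norm_num; linarith
  refine TRun.cons (v' := vvP δ 3) ⟨⟨2, 2, 3, [2], [(1, 0.3)]⟩, by simp [Pmm], rfl, rfl, rfl, ?_,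
    vvP_reset δ 2 _ rfl⟩ ?_
  · intro c hc; simp at hc; subst hc; rw [vvP_eval δ (by norm_num)]
    simp only [ttP]; norm_num; linarith
  refine TRun.cons (v' := vvP δ 4) ⟨⟨3, 3, 4, [3], [(2, 0.3)]⟩, by simp [Pmm], rfl, rfl, rfl, ?_,
    vvP_reset δ 3 _ rfl⟩ ?_
  · intro c hc; simp at hc; subst hc; rw [vvP_eval δ (by norm_num)]
    simp only [ttP]; norm_num; linarith
  refine TRun.cons (v' := vvP δ 5) ⟨⟨4, 4, 5, [4], [(3, 0.2)]⟩, by simp [Pmm], rfl, rfl, rfl, ?_,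
    vvP_reset δ 4 _ rfl⟩ ?_
  · intro c hc; simp at hc; subst hc; rw [vvP_eval δ (by norm_num)]
    simp only [ttP]; norm_num; linarith
  refine TRun.cons (v' := vvP δ 6) ⟨⟨5, 5, 6, [5], [(4, 0.3)]⟩, by simp [Pmm], rfl, rfl, rfl, ?_,
    vvP_reset δ 5 _ rfl⟩ ?_
  · intro c hc; simp at hc; subst hc; rw [vvP_eval δ (by norm_num)]
    simp only [ttP]; norm_num; linarith
  refine TRun.cons (v' := vvP δ 7) ⟨⟨6, 6, 7, [6], [(5, 0.3)]⟩, by simp [Pmm], rfl, rfl, rfl, ?_,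
    vvP_reset δ 6 _ rfl⟩ ?_
  · intro c hc; simp at hc; subst hc; rw [vvP_eval δ (by norm_num)]
    simp only [ttP]; norm_num; linarith
  refine TRun.cons (v' := vvP δ 8) ⟨⟨7, 7, 8, [7], [(6, 0.2)]⟩, by simp [Pmm], rfl, rfl, rfl, ?_,
    vvP_reset δ 7 _ rfl⟩ ?_
  · intro c hc; simp at hc; subst hc; rw [vvP_eval δ (by norm_num)]
    simp only [ttP]; norm_num; linarith
  refine TRun.cons (v' := vvP δ 9) ⟨⟨8, 8, 9, [8], [(7, 0.3)]⟩, by simp [Pmm], rfl, rfl, rfl, ?_,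
    vvP_reset δ 8 _ rfl⟩ ?_
  · intro c hc; simp at hc; subst hc; rw [vvP_eval δ (by norm_num)]
    simp only [ttP]; norm_num; linarith
  refine TRun.cons (v' := vvP δ 10) ⟨⟨9, 9, 10, [9], [(8, 0.3)]⟩, by simp [Pmm], rfl, rfl, rfl, ?_,
    vvP_reset δ 9 _ rfl⟩ ?_
  · intro c hc; simp at hc; subst hc; rw [vvP_eval δ (by norm_num)]
    simp only [ttP]; norm_num; linarith
  refine TRun.cons (v' := vvP δ 11) ⟨⟨10, 10, 11, [10], [(9, 1)]⟩, by simp [Pmm], rfl, rfl, rfl, ?_,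
    vvP_reset δ 10 _ rfl⟩ ?_
  · intro c hc; simp at hc; subst hc; rw [vvP_eval δ (by norm_num)]
    simp only [ttP]; norm_num; linarith
  refine TRun.cons (v' := vvP δ 12) ⟨⟨11, 11, 12, [11], [(10, 1.5)]⟩, by simp [Pmm], rfl, rfl, rfl, ?_,
    vvP_reset δ 11 _ rfl⟩ ?_
  · intro c hc; simp at hc; subst hc; rw [vvP_eval δ (by norm_num)]
    simp only [ttP]; norm_num; linarith
  refine TRun.cons (v' := vvP δ 12) ⟨⟨12, 12, 0, [], [(11, 4)]⟩, by simp [Pmm], rfl, rfl, rfl, ?_,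
    by simp⟩ ?_
  · intro c hc; simp at hc; subst hc; rw [vvP_eval δ (by norm_num)]
    simp only [ttP]; norm_num; linarith
  exact TRun.nil 0 (vvP δ 12)
lemma dur_lt_73 {q : ℕ} {v : ℕ → ℝ} {u : List (ℕ × ℝ)}
    (h : TRun Pmm.trans q v u [6, 7, 8, 9, 10, 11, 12, 0]) : duration u < 7.3 := by
  cases h with
  | cons s1 h => cases h with
  | cons s2 h => cases h with
  | cons s3 h => cases h with
  | cons s4 h => cases h with
  | cons s5 h => cases h with
  | cons s6 h => cases h with
  | cons s7 h =>
    cases h with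
    | cons _ h' => exact absurd h' (by rintro (_|_))
    | nil =>
      have h1 := step_at6 s1
      have h2 := step_at7 s2
      have h3 := step_at8 s3
      have h4 := step_at9 s4
      have h5 := step_at10 s5
      have h6 := step_at11 s6
      have h7 := step_at12 s7
      simp only [duration, lastTime, firstTime, List.map_cons, List.map_nil,
        List.headD_cons, List.getLastD_cons, List.getLastD_nil]
      norm_num at h1 h2 h3 h4 h5 h6 h7 ⊢
      linarith [h2.1, h3.1, h4.1, h5.1, h6.1, h7]

/-- For the path ρ₂ = ⟨s₆, s₇, …, s₁₂, s₀⟩, the maximum delay Δ_P(ρ₂) equals 7.3 ms: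
every subword over ρ₂ has duration < 7.3, and for every ε > 0 some subword over ρ₂ has
duration > 7.3 - ε. -/
theorem Pmm_maxDelay_rho2 :
    (∀ u, Pmm.SubwordOver [6, 7, 8, 9, 10, 11, 12, 0] u → duration u < 7.3) ∧
    (∀ ε : ℝ, 0 < ε → ∃ u, Pmm.SubwordOver [6, 7, 8, 9, 10, 11, 12, 0] u ∧
      7.3 - ε < duration u) := by
  constructor
  · intro u hu
    obtain ⟨w₀, qs₀, hlen, hinc, hrun⟩ := hu
    obtain ⟨q, v, hr⟩ := peel_run w₀ qs₀ _ _ u _ hlen hrun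
    exact dur_lt_73 hr
  · intro ε hε
    set δ : ℝ := min ε 1 / 12 with hδdef
    have hδ1 : 0 < δ := by
      have : (0:ℝ) < min ε 1 := lt_min hε one_pos
      positivity
    have hδ2 : δ < 0.2 := by
      have : min ε 1 ≤ 1 := min_le_right ε 1
      rw [hδdef]; norm_num; linarith
    have h6δ : 6 * δ < ε := by
      have : min ε 1 ≤ ε := min_le_left ε 1
      have : δ ≤ ε / 12 := by rw [hδdef]; linarith
      linarith
    refine ⟨[(6, ttP δ 6), (7, ttP δ 7), (8, ttP δ 8), (9, ttP δ 9), (10, ttP δ 10),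
        (11, ttP δ 11), (12, ttP δ 12)],
      ⟨[(0, ttP δ 0), (1, ttP δ 1), (2, ttP δ 2), (3, ttP δ 3), (4, ttP δ 4), (5, ttP δ 5)],
        [0, 1, 2, 3, 4, 5], by simp, ?_, ?_⟩, ?_⟩
    · simp only [Increasing, List.Chain', List.cons_append, List.nil_append, List.isChain_cons_cons,
        List.isChain_singleton, ttP, and_true]
      norm_num
      and_intros <;> linarith
    · have hv : (fun _ : ℕ => firstTime
          ([(0, ttP δ 0), (1, ttP δ 1), (2, ttP δ 2), (3, ttP δ 3), (4, ttP δ 4), (5, ttP δ 5)]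
            ++ [(6, ttP δ 6), (7, ttP δ 7), (8, ttP δ 8), (9, ttP δ 9), (10, ttP δ 10),
                (11, ttP δ 11), (12, ttP δ 12)])) = vvP δ 0 := by
        funext k; simp [firstTime, vvP, ttP]
      rw [hv]
      exact run_P δ hδ1 hδ2
    · simp only [duration, lastTime, firstTime, List.map_cons, List.map_nil,
        List.headD_cons, List.getLastD_cons, List.getLastD_nil, ttP]
      norm_num
      linarith
end
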